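/- arXiv:0809.1395 — 2 statements merged into one kernel-verified Lean document; each statement's English description precedes it below -/
import Mathlib

section
/- Assume p ≠ 2. There do not exist elements a, b ∈ M fixed by every element of G34 such that u12 = (σ1 − 1)·a + (σ2 − 1)·b in M, where u12 is viewed in M via the inclusions A_2(G12) ⊆ Q ⊆ M_ω ⊆ M. -/
open MonoidAlgebra

set_option maxHeartbeats 1000000
set_option synthInstance.maxHeartbeats 400000

noncomputable section

/-! ## Generic (unbundled) group-cohomology notions in low degree -/

/-- `f : G → A` is a 1-cocycle for the (unbundled) action `act`. -/
def IsOneCocycle {G : Type*} [Group G] {A : Type*} [AddCommGroup A]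
    (act : G → A → A) (f : G → A) : Prop :=
  ∀ g h : G, f (g * h) = act g (f h) + f g

/-- `f : G → A` is a 1-coboundary for the (unbundled) action `act`. -/
def IsOneCoboundary {G : Type*} [Group G] {A : Type*} [AddCommGroup A]
    (act : G → A → A) (f : G → A) : Prop :=
  ∃ a : A, ∀ g : G, f g = act g a - a

/-- `f : G → G → A` is a 2-coboundary for the (unbundled) action `act`. -/
def IsTwoCoboundary {G : Type*} [Group G] {A : Type*} [AddCommGroup A]
    (act : G → A → A) (f : G → G → A) : Prop :=
  ∃ c : G → A, ∀ g h : G, f g h = act g (c h) - c (g * h) + c g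

/-- restriction of an (unbundled) action to a subgroup. -/
def resAct {G : Type*} [Group G] {A : Type*} (H : Subgroup G) (act : G → A → A) :
    H → A → A := fun h => act (h : G)

/-! ## Augmentation ideal for a general group -/

/-- the augmentation map `Z[G] → Z`. -/
def augGen (G : Type*) [Group G] : MonoidAlgebra ℤ G →+* ℤ :=
  (MonoidAlgebra.lift ℤ ℤ G 1).toRingHom

/-- the augmentation ideal `I[G] ⊆ Z[G]`. -/
def IGen (G : Type*) [Group G] : Ideal (MonoidAlgebra ℤ G) := RingHom.ker (augGen G)

/-- the action of `G` on `I[G]` by left multiplication. -/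
def actIGen (G : Type*) [Group G] (g : G) (y : ↥(IGen G)) : ↥(IGen G) :=
  ⟨of ℤ G g * y.val, by
    have h0 : augGen G y.val = 0 := y.2
    simp [IGen, RingHom.mem_ker, map_mul, h0]⟩

/-- the distinguished 1-cocycle `d_H : H → I[G]`, `h ↦ h - 1`. -/
def dGen {G : Type*} [Group G] (H : Subgroup G) (h : H) : ↥(IGen G) :=
  ⟨of ℤ G (h : G) - 1, by simp [IGen, RingHom.mem_ker, map_sub, augGen]⟩

/-! ## The groups of the paper -/

/-- the elementary abelian group `G₁₂` of order `p²`. -/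
abbrev G12t (p : ℕ) := Multiplicative (ZMod p × ZMod p)
/-- a cyclic group of order `p`. -/
abbrev Cpt (p : ℕ) := Multiplicative (ZMod p)
/-- the elementary abelian group `G = ⟨σ₁⟩ × ⟨σ₂⟩ × ⟨σ₃⟩ × ⟨σ₄⟩` of order `p⁴`. -/
abbrev Gp (p : ℕ) := Multiplicative (ZMod p × ZMod p × ZMod p × ZMod p)

def t1 (p : ℕ) : G12t p := Multiplicative.ofAdd (1, 0)
def t2 (p : ℕ) : G12t p := Multiplicative.ofAdd (0, 1)
def c1g (p : ℕ) : Cpt p := Multiplicative.ofAdd 1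
def s1 (p : ℕ) : Gp p := Multiplicative.ofAdd (1, 0, 0, 0)
def s2 (p : ℕ) : Gp p := Multiplicative.ofAdd (0, 1, 0, 0)
def s3 (p : ℕ) : Gp p := Multiplicative.ofAdd (0, 0, 1, 0)
def s4 (p : ℕ) : Gp p := Multiplicative.ofAdd (0, 0, 0, 1)

/-- the group ring `Z[G₁₂]`. -/
abbrev R12 (p : ℕ) := MonoidAlgebra ℤ (G12t p)
/-- the group ring `Z[⟨σ⟩]` of a cyclic group of order `p`. -/
abbrev RCp (p : ℕ) := MonoidAlgebra ℤ (Cpt p)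
/-- the group ring `Z[G]`. -/
abbrev RG (p : ℕ) := MonoidAlgebra ℤ (Gp p)

/-- the quotient map `G → G₁₂ = G/G₃₄`. -/
def π12 (p : ℕ) : Gp p →* G12t p :=
  AddMonoidHom.toMultiplicative
    { toFun := fun v => (v.1, v.2.1), map_zero' := rfl, map_add' := fun _ _ => rfl }

/-- the quotient map `G → ⟨σ₃⟩ = G/⟨σ₁,σ₂,σ₄⟩`. -/
def π3 (p : ℕ) : Gp p →* Cpt p :=
  AddMonoidHom.toMultiplicative
    { toFun := fun v => v.2.2.1, map_zero' := rfl, map_add' := fun _ _ => rfl }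

/-- the quotient map `G → ⟨σ₄⟩ = G/⟨σ₁,σ₂,σ₃⟩`. -/
def π4 (p : ℕ) : Gp p →* Cpt p :=
  AddMonoidHom.toMultiplicative
    { toFun := fun v => v.2.2.2, map_zero' := rfl, map_add' := fun _ _ => rfl }

/-- the inclusion `G₁₂ → G`. -/
def emb12 (p : ℕ) : G12t p →* Gp p :=
  AddMonoidHom.toMultiplicative
    { toFun := fun v => (v.1, v.2, 0, 0), map_zero' := rfl,
      map_add' := fun _ _ => by ext <;> simp }

/-- the subgroup `G₁₂ = ⟨σ₁, σ₂⟩ ≤ G`. -/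
def G12sub (p : ℕ) : Subgroup (Gp p) := Subgroup.closure {s1 p, s2 p}
/-- the subgroup `G₃₄ = ⟨σ₃, σ₄⟩ ≤ G`. -/
def G34sub (p : ℕ) : Subgroup (Gp p) := Subgroup.closure {s3 p, s4 p}

/-! ## The lattice `A₂(G₁₂)` and its distinguished elements -/

/-- the map `Z[G₁₂]·d₁ ⊕ Z[G₁₂]·d₂ → I[G₁₂] ⊆ Z[G₁₂]`, `dᵢ ↦ σᵢ - 1`. -/
def d12map (p : ℕ) : (R12 p × R12 p) →ₗ[R12 p] R12 p :=
  (LinearMap.toSpanSingleton (R12 p) (R12 p) (of ℤ (G12t p) (t1 p) - 1)).comp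
      (LinearMap.fst (R12 p) (R12 p) (R12 p)) +
  (LinearMap.toSpanSingleton (R12 p) (R12 p) (of ℤ (G12t p) (t2 p) - 1)).comp
      (LinearMap.snd (R12 p) (R12 p) (R12 p))

/-- the lattice `A₂(G₁₂)`, the kernel of `Z[G₁₂]·d₁ ⊕ Z[G₁₂]·d₂ → I[G₁₂]`. -/
def A2G12 (p : ℕ) : Submodule (R12 p) (R12 p × R12 p) := LinearMap.ker (d12map p)

/-- `u₁₂ = (σ₂-1)d₁ - (σ₁-1)d₂` as an element of `Z[G₁₂]·d₁ ⊕ Z[G₁₂]·d₂`. -/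
def u12raw (p : ℕ) : R12 p × R12 p :=
  (of ℤ (G12t p) (t2 p) - 1, -(of ℤ (G12t p) (t1 p) - 1))

/-- the norm element `N = 1 + g + ⋯ + g^(p-1)` of a group ring. -/
def NN (p : ℕ) {G : Type*} [CommGroup G] (g : G) : MonoidAlgebra ℤ G :=
  ∑ k ∈ Finset.range p, of ℤ G g ^ k

/-- `b₁ = N₁·d₁`. -/
def b1raw (p : ℕ) : R12 p × R12 p := (NN p (t1 p), 0)
/-- `b₂ = N₂·d₂`. -/
def b2raw (p : ℕ) : R12 p × R12 p := (0, NN p (t2 p))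

lemma ofAdd_pow_p (p : ℕ) {A : Type*} [AddCommGroup A] (a : A) (h : p • a = 0) :
    (Multiplicative.ofAdd a) ^ p = 1 := by
  rw [← ofAdd_nsmul, h]; rfl

lemma zmod_p_smul (p : ℕ) (x : ZMod p) : p • x = 0 := by
  rw [nsmul_eq_mul, ZMod.natCast_self, zero_mul]

lemma t1_pow_p (p : ℕ) : (t1 p) ^ p = 1 := by
  refine ofAdd_pow_p p _ ?_
  rw [Prod.smul_mk, zmod_p_smul, zmod_p_smul]; rfl

lemma t2_pow_p (p : ℕ) : (t2 p) ^ p = 1 := by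
  refine ofAdd_pow_p p _ ?_
  rw [Prod.smul_mk, zmod_p_smul, zmod_p_smul]; rfl

lemma c1g_pow_p (p : ℕ) : (c1g p) ^ p = 1 := by
  refine ofAdd_pow_p p _ (zmod_p_smul p _)

lemma NN_mul (p : ℕ) {G : Type*} [CommGroup G] (g : G) (h : g ^ p = 1) :
    NN p g * (of ℤ G g - 1) = 0 := by
  rw [NN, geom_sum_mul, ← map_pow, h, map_one, sub_self]

lemma u12raw_mem (p : ℕ) : u12raw p ∈ A2G12 p := by
  simp only [A2G12, LinearMap.mem_ker, d12map, LinearMap.add_apply, LinearMap.comp_apply,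
    LinearMap.fst_apply, LinearMap.snd_apply, LinearMap.toSpanSingleton_apply, u12raw,
    smul_eq_mul]
  ring

lemma b1raw_mem (p : ℕ) : b1raw p ∈ A2G12 p := by
  simp only [A2G12, LinearMap.mem_ker, d12map, LinearMap.add_apply, LinearMap.comp_apply,
    LinearMap.fst_apply, LinearMap.snd_apply, LinearMap.toSpanSingleton_apply, b1raw,
    smul_eq_mul, zero_mul, add_zero]
  exact NN_mul p _ (t1_pow_p p)

lemma b2raw_mem (p : ℕ) : b2raw p ∈ A2G12 p := by
  simp only [A2G12, LinearMap.mem_ker, d12map, LinearMap.add_apply, LinearMap.comp_apply,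
    LinearMap.fst_apply, LinearMap.snd_apply, LinearMap.toSpanSingleton_apply, b2raw,
    smul_eq_mul, zero_mul, zero_add]
  exact NN_mul p _ (t2_pow_p p)

/-- `u₁₂` as an element of `A₂(G₁₂)`. -/
def u12e (p : ℕ) : ↥(A2G12 p) := ⟨u12raw p, u12raw_mem p⟩
/-- `b₁` as an element of `A₂(G₁₂)`. -/
def b1e (p : ℕ) : ↥(A2G12 p) := ⟨b1raw p, b1raw_mem p⟩
/-- `b₂` as an element of `A₂(G₁₂)`. -/
def b2e (p : ℕ) : ↥(A2G12 p) := ⟨b2raw p, b2raw_mem p⟩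

/-- the action of `G₁₂` on `A₂(G₁₂)`. -/
def actA2 (p : ℕ) (x : G12t p) (v : ↥(A2G12 p)) : ↥(A2G12 p) :=
  of ℤ (G12t p) x • v

/-! ## The cyclic lattice `A₂(⟨σ⟩)` -/

/-- the map `Z[⟨σ⟩]·d → I[⟨σ⟩]`, `d ↦ σ - 1`. -/
def dcmap (p : ℕ) : RCp p →ₗ[RCp p] RCp p :=
  LinearMap.toSpanSingleton (RCp p) (RCp p) (of ℤ (Cpt p) (c1g p) - 1)

/-- the lattice `A₂(⟨σ⟩)` for a cyclic group of order `p`. -/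
def A2C (p : ℕ) : Submodule (RCp p) (RCp p) := LinearMap.ker (dcmap p)

/-- the norm element `N = 1 + σ + ⋯ + σ^(p-1)` as an element of `A₂(⟨σ⟩)`. -/
def NCe (p : ℕ) : ↥(A2C p) :=
  ⟨NN p (c1g p), by
    simp only [A2C, LinearMap.mem_ker, dcmap, LinearMap.toSpanSingleton_apply, smul_eq_mul]
    exact NN_mul p _ (c1g_pow_p p)⟩

/-- the action of `G` on `A₂(⟨σⱼ⟩)` through a projection `π : G → ⟨σⱼ⟩`. -/
def actCvia (p : ℕ) (π : Gp p →* Cpt p) (g : Gp p) (v : ↥(A2C p)) : ↥(A2C p) :=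
  of ℤ (Cpt p) (π g) • v

/-! ## The explicit canonical 2-cocycles -/

/-- the elements `u_{m,n} ∈ A₂(G₁₂)` (equation (13) of the paper). -/
def umn (p : ℕ) (m1 m2 n1 n2 : ℕ) : ↥(A2G12 p) :=
  (-(of ℤ (G12t p) (t1 p ^ m1) * ∑ j ∈ Finset.range n1, ∑ i ∈ Finset.range m2,
      of ℤ (G12t p) (t1 p ^ i * t2 p ^ j))) • u12e p +
  (of ℤ (G12t p) (t1 p ^ n1) * ∑ j ∈ Finset.range n2, ∑ i ∈ Finset.range m1,
      of ℤ (G12t p) (t1 p ^ i * t2 p ^ j)) • u12e p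

/-- the explicit 2-cocycle `c₁₂` representing the canonical class `[c_{G₁₂}]`. -/
def c12coc (p : ℕ) (x y : G12t p) : ↥(A2G12 p) :=
  let m1 := (Multiplicative.toAdd x).1.val
  let m2 := (Multiplicative.toAdd x).2.val
  let n1 := (Multiplicative.toAdd y).1.val
  let n2 := (Multiplicative.toAdd y).2.val
  of ℤ (G12t p) (t1 p ^ m1) • umn p 0 m2 n1 0 +
    ((m1 + n1) / p) • b1e p +
    ((m2 + n2) / p) • (of ℤ (G12t p) (t1 p ^ ((m1 + n1) % p)) • b2e p)

/-- the explicit 2-cocycle representing the canonical class of a cyclic group of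
order `p` with coefficients in `A₂(⟨σ⟩)`. -/
def ccyc (p : ℕ) (x y : Cpt p) : ↥(A2C p) :=
  if p ≤ (Multiplicative.toAdd x).val + (Multiplicative.toAdd y).val then NCe p else 0

/-! ## The lattice `Q = A₂(G₁₂) ⊕ K₃ ⊕ K₄` -/

/-- `K_j = A₂(⟨σⱼ⟩) ⊕ Z[⟨σⱼ⟩]`. -/
abbrev Kc (p : ℕ) := ↥(A2C p) × RCp p

/-- the carrier of the `G`-lattice `Q = A₂(G₁₂) ⊕ K₃ ⊕ K₄`. -/
abbrev Qc (p : ℕ) := ↥(A2G12 p) × Kc p × Kc p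

/-- the action of `G` on `Q`: `G₁₂` acts naturally on `A₂(G₁₂)` and trivially on
`K₃`, `K₄`; `⟨σⱼ⟩` acts naturally on `K_j` and trivially elsewhere. -/
def actQ (p : ℕ) (g : Gp p) (q : Qc p) : Qc p :=
  (of ℤ (G12t p) (π12 p g) • q.1,
   (of ℤ (Cpt p) (π3 p g) • q.2.1.1, of ℤ (Cpt p) (π3 p g) * q.2.1.2),
   (of ℤ (Cpt p) (π4 p g) • q.2.2.1, of ℤ (Cpt p) (π4 p g) * q.2.2.2))

/-- the 2-cocycle `ω = inf(c₁₂) - inf(c₃) - inf(c₄)` with values in `Q`. -/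
def ωc (p : ℕ) (g g' : Gp p) : Qc p :=
  (c12coc p (π12 p g) (π12 p g'),
   (-(ccyc p (π3 p g) (π3 p g')), 0),
   (-(ccyc p (π4 p g) (π4 p g')), 0))

/-- the order of the restriction of `[ω]` to a subgroup `H ≤ G` in `H²(H, Q)`. -/
def nOrd (p : ℕ) (H : Subgroup (Gp p)) : ℕ :=
  sInf {n : ℕ | 0 < n ∧
    IsTwoCoboundary (resAct H (actQ p)) fun h h' => n • ωc p (h : Gp p) (h' : Gp p)}

/-! ## The augmentation ideal `I[G]` and the lattice `M_ω` -/

/-- the augmentation map `Z[G] → Z`. -/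
def aug (p : ℕ) : RG p →+* ℤ := (MonoidAlgebra.lift ℤ ℤ (Gp p) 1).toRingHom

/-- the augmentation ideal `I[G]`. -/
def IG (p : ℕ) : Ideal (RG p) := RingHom.ker (aug p)

/-- the action of `G` on `I[G]` by left multiplication. -/
def actIG (p : ℕ) (g : Gp p) (y : ↥(IG p)) : ↥(IG p) :=
  ⟨of ℤ (Gp p) g * y.val, by
    have h0 : aug p y.val = 0 := y.2
    simp [IG, RingHom.mem_ker, map_mul, h0]⟩

/-- the 1-cocycle `d_H : H → I[G]`, `h ↦ h - 1`. -/
def dH (p : ℕ) (H : Subgroup (Gp p)) (h : H) : ↥(IG p) :=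
  ⟨of ℤ (Gp p) (h : Gp p) - 1, by simp [IG, RingHom.mem_ker, map_sub, aug]⟩

/-- the carrier of the `G`-lattice `M_ω = Q ⊕ I[G]`. -/
abbrev Mc (p : ℕ) := Qc p × ↥(IG p)

/-- the `Q`-valued correction term of the twisted action on `M_ω`:
`θ(g, Σ a_{g'} g') = Σ a_{g'} ω(g, g')`; on `y ∈ I[G]` (so `Σ a_{g'} = 0` and
`y = Σ a_{g'} (g' - 1)`) this is the `Q`-component of `g·(0, y)`. -/
def θω (p : ℕ) (g : Gp p) (y : RG p) : Qc p :=
  Finsupp.sum y.coeff fun g' a => a • ωc p g g'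

/-- the twisted action of `G` on `M_ω = Q ⊕ I[G]`: `g(x,0) = (gx, 0)` and
`g(0, g'-1) = (ω(g,g'), g(g'-1))`, extended `Z`-linearly. -/
def actM (p : ℕ) (g : Gp p) (m : Mc p) : Mc p :=
  (actQ p g m.1 + θω p g m.2.val, actIG p g m.2)

/-! ## The map `π : A₂(G₁₂) → Z/pZ` -/

/-- the `G₁₂`-module homomorphism `π : A₂(G₁₂) → Z/pZ`, determined by
`π(x·u₁₂ + y·b₁ + z·b₂) = ε(x) mod p`; concretely it sends `v = (v₁, v₂)` to
`Σ_g v₁(g)·(exponent of σ₂ in g)`. -/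
def πmap (p : ℕ) (v : ↥(A2G12 p)) : ZMod p :=
  Finsupp.sum (v : R12 p × R12 p).1.coeff fun g a => (a : ZMod p) * (Multiplicative.toAdd g).2

/-! ## The set `𝓗` of subgroups, the cochains `v_H`, and the lattice `M` -/

/-- the set of subgroups `𝓗 = {G} ∪ {⟨τ, σ₃, σ₄⟩ : τ ∈ G₁₂}`. -/
def HH (p : ℕ) : Set (Subgroup (Gp p)) :=
  insert ⊤ {H | ∃ τ ∈ G12sub p, H = Subgroup.closure {τ, s3 p, s4 p}}

/-- the 1-cochain `v_H : H₁₂ → A₂(G₁₂)`, `v_H(h̄₁) = Σ_{h̄ ∈ H₁₂} c₁₂(h̄₁, h̄)`,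
here inflated to a function of `h̄₁ ∈ G₁₂`. -/
def vH (p : ℕ) (H : Subgroup (Gp p)) (x : G12t p) : ↥(A2G12 p) :=
  ∑ᶠ h' : ↥(H.map (π12 p)), c12coc p x (h' : G12t p)

/-- the 1-cochain `f_H : H → M_ω`, `f_H(h) = (z_H(h) - v_H(h̄), n_H·(h-1))`,
built from a choice of 1-cochain `z_H : H → K₃ ⊕ K₄`. -/
def fHof (p : ℕ) (H : Subgroup (Gp p)) (zH : H → Kc p × Kc p) (h : H) : Mc p :=
  ((-(vH p H (π12 p (h : Gp p))), (zH h).1, (zH h).2),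
   (nOrd p H) • dH p H h)

/-- the carrier of the permutation lattice `P = ⊕_{H ∈ 𝓗} Z[G/H]`. -/
abbrev Pc (p : ℕ) := ∀ H : ↥(HH p), ((Gp p ⧸ (H : Subgroup (Gp p))) →₀ ℤ)

/-- the carrier of the `G`-lattice `M = M_ω ⊕ P`. -/
abbrev MC (p : ℕ) := Mc p × Pc p

/-- the action of `G` on `M = M_ω ⊕ P`, twisted by a family of 1-cocycles
`f_H : H → M_ω` (`H ∈ 𝓗`): `g(x, 0) = (gx, 0)` and
`g(0, u_{gᵢH}) = (gⱼ·f_H(h), u_{gⱼH})` where `g·gᵢ = gⱼ·h`, `h ∈ H`, and the coset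
representatives are chosen by `Quotient.out`. -/
def actMFull (p : ℕ) (fH : ∀ H : ↥(HH p), (↥(H.val) → Mc p))
    (g : Gp p) (m : MC p) : MC p :=
  (actM p g m.1 +
     ∑ᶠ H : ↥(HH p), Finsupp.sum (m.2 H) fun c a =>
       a • actM p (Quotient.out (g • c))
         (fH H ⟨(Quotient.out (g • c))⁻¹ * (g * Quotient.out c), by
            rw [← QuotientGroup.eq, QuotientGroup.out_eq', ← smul_eq_mul,
              MulAction.Quotient.mk_smul_out]⟩),
   fun H => Finsupp.mapDomain (fun c => g • c) (m.2 H))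

/-- the map `π' : M → Z/pZ`, `(x₀, x₁, x₂, y, z) ↦ π(x₀)`. -/
def πmap' (p : ℕ) (m : MC p) : ZMod p := πmap p m.1.1.1

/-- the norm element `N₃₄ = Σ_{g ∈ G₃₄} g ∈ Z[G]`. -/
def N34 (p : ℕ) : RG p := ∑ᶠ g : ↥(G34sub p), of ℤ (Gp p) (g : Gp p)

/-- the augmentation map `Z[G₁₂] → Z`. -/
def aug12 (p : ℕ) : R12 p →+* ℤ := (MonoidAlgebra.lift ℤ ℤ (G12t p) 1).toRingHom


/-! ## auxiliary machinery -/

namespace Aux16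
open Finsupp

variable (p : ℕ)

/-- generic weighted coefficient-sum functional on a monoid algebra -/
def Dfun {G : Type*} (w : G → ZMod p) : MonoidAlgebra ℤ G →+ ZMod p :=
  (Finsupp.liftAddHom fun g =>
    { toFun := fun a : ℤ => (a : ZMod p) * w g
      map_zero' := by simp
      map_add' := fun x y => by push_cast; ring }).comp
      MonoidAlgebra.coeffAddEquiv.toAddMonoidHom

variable {p}

lemma Dfun_apply {G : Type*} (w : G → ZMod p) (x : MonoidAlgebra ℤ G) :
    Dfun p w x = x.coeff.sum fun g a => (a : ZMod p) * w g := by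
  rw [Dfun]; exact Finsupp.liftAddHom_apply _ x.coeff

lemma Dfun_single {G : Type*} (w : G → ZMod p) (g : G) (a : ℤ) :
    Dfun p w (MonoidAlgebra.single g a) = (a : ZMod p) * w g := by
  rw [Dfun_apply, MonoidAlgebra.coeff_single, Finsupp.sum_single_index (by simp)]

lemma Dfun_mul_single {G : Type*} [Monoid G] (w : G → ZMod p)
    (x : MonoidAlgebra ℤ G) (g : G) :
    Dfun p w (x * MonoidAlgebra.single g 1) =
      x.coeff.sum fun h b => (b : ZMod p) * w (h * g) := by
  rw [MonoidAlgebra.mul_def, map_finsuppSum]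
  refine Finsupp.sum_congr fun h _ => ?_
  rw [MonoidAlgebra.coeff_single, Finsupp.sum_single_index (by simp), mul_one, Dfun_single]

lemma Dfun_single_mul {G : Type*} [Monoid G] (w : G → ZMod p)
    (g : G) (y : MonoidAlgebra ℤ G) :
    Dfun p w (MonoidAlgebra.single g 1 * y) =
      y.coeff.sum fun h b => (b : ZMod p) * w (g * h) := by
  rw [MonoidAlgebra.mul_def, MonoidAlgebra.coeff_single, Finsupp.sum_single_index (by simp),
    map_finsuppSum]
  refine Finsupp.sum_congr fun h _ => ?_
  rw [one_mul, Dfun_single]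


variable (p : ℕ)

def augZ {G : Type*} : MonoidAlgebra ℤ G →+ ZMod p := Dfun p (fun _ => 1)

variable {p}

lemma augZ_apply {G : Type*} (x : MonoidAlgebra ℤ G) :
    augZ p x = x.coeff.sum fun _ a => (a : ZMod p) := by
  rw [augZ, Dfun_apply]; simp

lemma Dfun_single_mul_add {G : Type*} [Monoid G] {w : G → ZMod p}
    (hw : ∀ a b : G, w (a * b) = w a + w b) (g : G) (y : MonoidAlgebra ℤ G) :
    Dfun p w (MonoidAlgebra.single g 1 * y) = w g * augZ p y + Dfun p w y := by
  rw [Dfun_single_mul,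
    show (y.coeff.sum fun h b => (b : ZMod p) * w (g * h))
        = y.coeff.sum fun h b => ((b : ZMod p)) * w g + (b : ZMod p) * w h from
      Finsupp.sum_congr fun h _ => by rw [hw]; ring,
    Finsupp.sum_add, ← Finsupp.sum_mul, augZ_apply, Dfun_apply, mul_comm]

lemma Dfun_mul_single_add {G : Type*} [Monoid G] {w : G → ZMod p}
    (hw : ∀ a b : G, w (a * b) = w a + w b) (x : MonoidAlgebra ℤ G) (g : G) :
    Dfun p w (x * MonoidAlgebra.single g 1) = w g * augZ p x + Dfun p w x := by
  rw [Dfun_mul_single,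
    show (x.coeff.sum fun h b => (b : ZMod p) * w (h * g))
        = x.coeff.sum fun h b => ((b : ZMod p)) * w g + (b : ZMod p) * w h from
      Finsupp.sum_congr fun h _ => by rw [hw]; ring,
    Finsupp.sum_add, ← Finsupp.sum_mul, augZ_apply, Dfun_apply, mul_comm]

variable (p) in
def e1₂ : G12t p → ZMod p := fun x => (Multiplicative.toAdd x).1
variable (p) in
def e2₂ : G12t p → ZMod p := fun x => (Multiplicative.toAdd x).2
variable (p) in
def E1 : Gp p → ZMod p := fun g => (Multiplicative.toAdd g).1

lemma e1₂_mul (x y : G12t p) : e1₂ p (x * y) = e1₂ p x + e1₂ p y := rfl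
lemma e2₂_mul (x y : G12t p) : e2₂ p (x * y) = e2₂ p x + e2₂ p y := rfl
lemma E1_mul (x y : Gp p) : E1 p (x * y) = E1 p x + E1 p y := rfl

variable (p) in
def πh : ↥(A2G12 p) →+ ZMod p :=
  (Dfun p (e2₂ p)).comp ((AddMonoidHom.fst (R12 p) (R12 p)).comp
    ((A2G12 p).subtype.toAddMonoidHom))

lemma πh_apply (v : ↥(A2G12 p)) : πh p v = Dfun p (e2₂ p) (v : R12 p × R12 p).1 := rfl

/-- the augmentation of the first component of an element of `A₂(G₁₂)` vanishes mod `p`. -/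
lemma augZ_fst (v : ↥(A2G12 p)) : augZ p ((v : R12 p × R12 p).1) = 0 := by
  have hv : ((v : R12 p × R12 p).1) * (of ℤ (G12t p) (t1 p) - 1)
      + ((v : R12 p × R12 p).2) * (of ℤ (G12t p) (t2 p) - 1) = 0 := by
    have h2 := v.2
    simp only [A2G12, LinearMap.mem_ker, d12map, LinearMap.add_apply, LinearMap.comp_apply,
      LinearMap.fst_apply, LinearMap.snd_apply, LinearMap.toSpanSingleton_apply,
      smul_eq_mul] at h2
    exact h2
  have happ := congrArg (Dfun p (e1₂ p)) hv
  rw [map_zero, map_add, mul_sub, mul_one, mul_sub, mul_one, map_sub, map_sub,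
    MonoidAlgebra.of_apply, MonoidAlgebra.of_apply,
    Dfun_mul_single_add e1₂_mul, Dfun_mul_single_add e1₂_mul] at happ
  have h1 : e1₂ p (t1 p) = 1 := rfl
  have h2 : e1₂ p (t2 p) = 0 := rfl
  rw [h1, h2, one_mul, zero_mul] at happ
  simpa using happ

lemma πh_of_smul (x : G12t p) (v : ↥(A2G12 p)) :
    πh p (of ℤ (G12t p) x • v) = πh p v := by
  have hc : ((of ℤ (G12t p) x • v : ↥(A2G12 p)) : R12 p × R12 p).1
      = MonoidAlgebra.single x 1 * (v : R12 p × R12 p).1 := by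
    rw [Submodule.coe_smul, Prod.smul_fst, smul_eq_mul, MonoidAlgebra.of_apply]
  rw [πh_apply, hc, Dfun_single_mul_add e2₂_mul, augZ_fst, mul_zero, zero_add, πh_apply]

lemma πh_smul_u12e (r : R12 p) : πh p (r • u12e p) = augZ p r := by
  have hc : ((r • u12e p : ↥(A2G12 p)) : R12 p × R12 p).1
      = r * MonoidAlgebra.single (t2 p) 1 - r := by
    rw [Submodule.coe_smul]
    show r • (u12raw p).1 = _
    rw [u12raw, smul_eq_mul, mul_sub, mul_one, MonoidAlgebra.of_apply]
  rw [πh_apply, hc, map_sub, Dfun_mul_single_add e2₂_mul]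
  have h2 : e2₂ p (t2 p) = 1 := rfl
  rw [h2, one_mul]
  simp

lemma πh_b1e : πh p (b1e p) = 0 := by
  rw [πh_apply]
  show Dfun p (e2₂ p) (NN p (t1 p)) = 0
  rw [NN, map_sum]
  refine Finset.sum_eq_zero fun k _ => ?_
  rw [← map_pow, MonoidAlgebra.of_apply, Dfun_single]
  have : e2₂ p (t1 p ^ k) = 0 := by
    show ((Multiplicative.toAdd (t1 p ^ k)).2 : ZMod p) = 0
    rw [toAdd_pow]
    show (k • ((1 : ZMod p), (0 : ZMod p))).2 = 0
    rw [Prod.smul_snd, smul_zero]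
  rw [this, mul_zero]

lemma πh_smul_b2e (r : R12 p) : πh p (r • b2e p) = 0 := by
  have hc : ((r • b2e p : ↥(A2G12 p)) : R12 p × R12 p).1 = 0 := by
    rw [Submodule.coe_smul]
    show r • (b2raw p).1 = _
    rw [b2raw, smul_eq_mul, mul_zero]
  rw [πh_apply, hc, map_zero]


lemma augZ_of {G : Type*} [Monoid G] (g : G) : augZ p (of ℤ G g) = 1 := by
  rw [MonoidAlgebra.of_apply, augZ, Dfun_single, mul_one, Int.cast_one]

lemma πh_c12 [NeZero p] (x y : G12t p) :
    πh p (c12coc p x y) = -(e2₂ p x * e1₂ p y) := by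
  have hmain : πh p (c12coc p x y)
      = πh p (of ℤ (G12t p) (t1 p ^ (Multiplicative.toAdd x).1.val) •
          umn p 0 (Multiplicative.toAdd x).2.val (Multiplicative.toAdd y).1.val 0) := by
    rw [c12coc]
    rw [map_add, map_add, AddMonoidHom.map_nsmul, AddMonoidHom.map_nsmul,
      πh_b1e, πh_smul_b2e, smul_zero, smul_zero, add_zero, add_zero]
  rw [hmain, πh_of_smul]
  set m2 := (Multiplicative.toAdd x).2.val with hm2
  set n1 := (Multiplicative.toAdd y).1.val with hn1
  have humn : umn p 0 m2 n1 0
      = (-(∑ j ∈ Finset.range n1, ∑ i ∈ Finset.range m2,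
          of ℤ (G12t p) (t1 p ^ i * t2 p ^ j))) • u12e p := by
    rw [umn]
    simp only [Finset.range_zero, Finset.sum_empty, mul_zero, zero_smul, add_zero,
      pow_zero, map_one, one_mul]
  rw [humn, πh_smul_u12e, map_neg, map_sum]
  have hsum : ∀ j, augZ p (∑ i ∈ Finset.range m2, of ℤ (G12t p) (t1 p ^ i * t2 p ^ j))
      = (m2 : ZMod p) := by
    intro j
    rw [map_sum]
    rw [Finset.sum_congr rfl (fun i _ => augZ_of (p := p) (t1 p ^ i * t2 p ^ j))]
    rw [Finset.sum_const, Finset.card_range, nsmul_eq_mul, mul_one]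
  rw [Finset.sum_congr rfl fun j _ => hsum j, Finset.sum_const, Finset.card_range,
    nsmul_eq_mul]
  have hc1 : ((n1 : ℕ) : ZMod p) = e1₂ p y := by
    rw [hn1]
    show _ = (Multiplicative.toAdd y).1
    rw [ZMod.natCast_val, ZMod.cast_id]
  have hc2 : ((m2 : ℕ) : ZMod p) = e2₂ p x := by
    rw [hm2]
    show _ = (Multiplicative.toAdd x).2
    rw [ZMod.natCast_val, ZMod.cast_id]
  rw [hc1, hc2, mul_comm]

lemma e1₂_inv (x : G12t p) : e1₂ p x⁻¹ = - e1₂ p x := rfl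

lemma finsum_e1_subgroup [NeZero p] (hp : p.Prime) (hodd : p ≠ 2) (S : Subgroup (G12t p)) :
    ∑ᶠ h : ↥S, e1₂ p (h : G12t p) = 0 := by
  haveI := Fact.mk hp
  haveI : Fintype ↥S := Fintype.ofFinite _
  rw [finsum_eq_sum_of_fintype]
  have hneg : ∑ h : ↥S, e1₂ p (h : G12t p) = ∑ h : ↥S, - e1₂ p (h : G12t p) := by
    rw [← Equiv.sum_comp (Equiv.inv ↥S) (fun h : ↥S => e1₂ p (h : G12t p))]
    refine Finset.sum_congr rfl fun h _ => ?_
    show e1₂ p ((h⁻¹ : ↥S) : G12t p) = _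
    rw [Subgroup.coe_inv, e1₂_inv]
  have h2 : (2 : ZMod p) * ∑ h : ↥S, e1₂ p (h : G12t p) = 0 := by
    rw [two_mul]
    nth_rewrite 2 [hneg]
    rw [← Finset.sum_add_distrib]
    simp
  have hne : (2 : ZMod p) ≠ 0 := by
    intro h
    rw [show (2 : ZMod p) = ((2 : ℕ) : ZMod p) by norm_num,
      ZMod.natCast_eq_zero_iff] at h
    exact hodd ((Nat.prime_dvd_prime_iff_eq hp Nat.prime_two).mp h)
  rcases mul_eq_zero.mp h2 with h | h
  · exact absurd h hne
  · exact h

lemma πh_vH [NeZero p] (hp : p.Prime) (hodd : p ≠ 2) (H : Subgroup (Gp p)) (x : G12t p) :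
    πh p (vH p H x) = 0 := by
  haveI : Fintype ↥(H.map (π12 p)) := Fintype.ofFinite _
  rw [vH, finsum_eq_sum_of_fintype, map_sum]
  have h1 : ∑ h' : ↥(H.map (π12 p)), πh p (c12coc p x (h' : G12t p))
      = -(e2₂ p x * ∑ h' : ↥(H.map (π12 p)), e1₂ p (h' : G12t p)) := by
    rw [Finset.mul_sum, ← Finset.sum_neg_distrib]
    exact Finset.sum_congr rfl fun h' _ => πh_c12 x (h' : G12t p)
  rw [h1, ← finsum_eq_sum_of_fintype, finsum_e1_subgroup hp hodd, mul_zero, neg_zero]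


lemma s3_mem_of_mem_HH {H : Subgroup (Gp p)} (hH : H ∈ HH p) : s3 p ∈ H := by
  rcases Set.mem_insert_iff.mp hH with rfl | ⟨τ, hτ, rfl⟩
  · exact Subgroup.mem_top _
  · exact Subgroup.subset_closure (by simp)

lemma A2C_c1g_smul (v : ↥(A2C p)) : of ℤ (Cpt p) (c1g p) • v = v := by
  have hv : (v : RCp p) * (of ℤ (Cpt p) (c1g p) - 1) = 0 := by
    have h2 := v.2
    simp only [A2C, LinearMap.mem_ker, dcmap, LinearMap.toSpanSingleton_apply,
      smul_eq_mul] at h2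
    exact h2
  apply Subtype.ext
  rw [Submodule.coe_smul, smul_eq_mul, mul_comm]
  rw [mul_sub, mul_one] at hv
  exact sub_eq_zero.mp hv

lemma A2C_c1g_pow_smul (j : ℕ) (v : ↥(A2C p)) : of ℤ (Cpt p) (c1g p ^ j) • v = v := by
  induction j with
  | zero => rw [pow_zero, map_one, one_smul]
  | succ n ih => rw [pow_succ, map_mul, mul_smul, A2C_c1g_smul, ih]

lemma s3_pow_p : (s3 p) ^ p = 1 := by
  refine ofAdd_pow_p p _ ?_
  rw [Prod.smul_mk, Prod.smul_mk, Prod.smul_mk, zmod_p_smul, zmod_p_smul]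
  rfl

lemma π3_s3_pow (j : ℕ) : π3 p (s3 p ^ j) = c1g p ^ j := by
  rw [map_pow]; rfl

lemma toAdd_c1g_pow (j : ℕ) : Multiplicative.toAdd (c1g p ^ j) = (j : ZMod p) := by
  rw [toAdd_pow]
  show j • (1 : ZMod p) = _
  rw [nsmul_eq_mul, mul_one]

variable (p) in
def evA2C : ↥(A2C p) →+ ℤ :=
  (Finsupp.applyAddHom (1 : Cpt p)).comp (MonoidAlgebra.coeffAddEquiv.toAddMonoidHom.comp
    ((A2C p).subtype.toAddMonoidHom))

lemma evA2C_NCe [NeZero p] (hp : p.Prime) : evA2C p (NCe p) = 1 := by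
  show (NN p (c1g p) : RCp p).coeff 1 = 1
  rw [NN]
  rw [show (∑ k ∈ Finset.range p, of ℤ (Cpt p) (c1g p) ^ k : RCp p).coeff 1
      = ∑ k ∈ Finset.range p, (of ℤ (Cpt p) (c1g p) ^ k : RCp p).coeff 1 from
    by rw [MonoidAlgebra.coeff_sum, Finsupp.finset_sum_apply]]
  rw [Finset.sum_eq_single_of_mem 0 (Finset.mem_range.mpr hp.pos)]
  · rw [pow_zero]
    show (1 : RCp p).coeff 1 = 1
    rw [MonoidAlgebra.one_def, MonoidAlgebra.coeff_single, Finsupp.single_apply, if_pos rfl]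
  · intro k hk hk0
    rw [← map_pow, MonoidAlgebra.of_apply, MonoidAlgebra.coeff_single, Finsupp.single_apply, if_neg, ]
    intro h
    have : (k : ZMod p) = 0 := by
      have := congrArg Multiplicative.toAdd h
      rw [toAdd_c1g_pow] at this
      simpa using this
    rw [ZMod.natCast_eq_zero_iff] at this
    exact hk0 (Nat.eq_zero_of_dvd_of_lt this (Finset.mem_range.mp hk))

lemma p_dvd_nOrd [NeZero p] (hp : p.Prime) {H : Subgroup (Gp p)} (hH : H ∈ HH p) :
    p ∣ nOrd p H := by
  haveI := Fact.mk hp.one_lt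
  by_cases hne : {n : ℕ | 0 < n ∧ IsTwoCoboundary (resAct H (actQ p))
      fun h h' => n • ωc p (h : Gp p) (h' : Gp p)}.Nonempty
  swap
  · rw [nOrd, Set.not_nonempty_iff_eq_empty.mp hne, Nat.sInf_empty]
    exact dvd_zero p
  obtain ⟨hpos, c, hc⟩ := (Nat.sInf_mem hne : nOrd p H ∈ _)
  have hs3 : s3 p ∈ H := s3_mem_of_mem_HH hH
  set els : ℕ → ↥H := fun j => ⟨s3 p ^ j, H.pow_mem hs3 j⟩ with hels
  set ψ : ℕ → ↥(A2C p) := fun j => (c (els j)).2.1.1 with hψ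
  have key : ∀ j : ℕ, (nOrd p H) • (-(ccyc p (c1g p ^ j) (c1g p)))
      = ψ 1 - ψ (j+1) + ψ j := by
    intro j
    have hmul : els j * els 1 = els (j+1) := by
      apply Subtype.ext
      show s3 p ^ j * s3 p ^ 1 = s3 p ^ (j+1)
      rw [pow_one, pow_succ]
    have h0 := hc (els j) (els 1)
    rw [hmul] at h0
    have h1 := congrArg (fun q : Qc p => q.2.1.1) h0
    simp only [Prod.smul_snd, Prod.smul_fst, Prod.snd_sub, Prod.fst_sub,
      Prod.snd_add, Prod.fst_add] at h1
    have hω : (ωc p ((els j : Gp p)) ((els 1 : Gp p))).2.1.1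
        = -(ccyc p (c1g p ^ j) (c1g p)) := by
      show -(ccyc p (π3 p (s3 p ^ j)) (π3 p (s3 p ^ 1))) = _
      rw [π3_s3_pow, π3_s3_pow, pow_one]
    have hact : (resAct H (actQ p) (els j) (c (els 1))).2.1.1
        = of ℤ (Cpt p) (c1g p ^ j) • ψ 1 := by
      show of ℤ (Cpt p) (π3 p (s3 p ^ j)) • (c (els 1)).2.1.1 = _
      rw [π3_s3_pow]
    rw [hω, hact, A2C_c1g_pow_smul] at h1
    exact h1
  have hsum := Finset.sum_congr rfl (fun j (_ : j ∈ Finset.range p) => key j)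
  have hLHS : ∑ j ∈ Finset.range p, (nOrd p H) • (-(ccyc p (c1g p ^ j) (c1g p)))
      = (nOrd p H) • (-(NCe p)) := by
    rw [← Finset.smul_sum]
    congr 1
    have hterm : ∀ j ∈ Finset.range p, -(ccyc p (c1g p ^ j) (c1g p))
        = if j = p - 1 then -(NCe p) else 0 := by
      intro j hj
      have hj' := Finset.mem_range.mp hj
      have hval : (Multiplicative.toAdd (c1g p ^ j)).val = j := by
        rw [toAdd_c1g_pow, ZMod.val_natCast, Nat.mod_eq_of_lt hj']
      have hval1 : (Multiplicative.toAdd (c1g p)).val = 1 := by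
        show (Multiplicative.toAdd (Multiplicative.ofAdd (1 : ZMod p))).val = 1
        rw [toAdd_ofAdd, ZMod.val_one]
      rw [ccyc, hval, hval1]
      by_cases hcase : j = p - 1
      · have hle : p ≤ j + 1 := by omega
        rw [if_pos hcase, if_pos hle]
      · have hle : ¬ (p ≤ j + 1) := by omega
        rw [if_neg hle, neg_zero, if_neg hcase]
    rw [Finset.sum_congr rfl hterm, Finset.sum_ite_eq' (Finset.range p) (p-1) _,
      if_pos (Finset.mem_range.mpr (by have := hp.pos; omega))]
  have hRHS : ∑ j ∈ Finset.range p, (ψ 1 - ψ (j+1) + ψ j) = p • ψ 1 := by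
    have hterm : ∀ j ∈ Finset.range p, ψ 1 - ψ (j+1) + ψ j
        = ψ 1 + (ψ j - ψ (j+1)) := fun j _ => by abel
    rw [Finset.sum_congr rfl hterm, Finset.sum_add_distrib, Finset.sum_const,
      Finset.card_range, Finset.sum_range_sub']
    have hψp : ψ p = ψ 0 := by
      have h00 : els p = els 0 :=
        Subtype.ext (by show s3 p ^ p = s3 p ^ 0; rw [pow_zero, s3_pow_p])
      show (c (els p)).2.1.1 = (c (els 0)).2.1.1
      rw [h00]
    rw [hψp, sub_self, add_zero]
  have heq : (nOrd p H) • (-(NCe p)) = p • ψ 1 := by rw [← hLHS, hsum, hRHS]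
  have hev := congrArg (evA2C p) heq
  rw [AddMonoidHom.map_nsmul, AddMonoidHom.map_nsmul, map_neg, evA2C_NCe hp,
    nsmul_eq_mul, nsmul_eq_mul] at hev
  refine Int.natCast_dvd_natCast.mp ⟨-(evA2C p (ψ 1)), ?_⟩
  push_cast
  linarith


variable (p) in
def ΦQ : Qc p →+ ZMod p :=
  (πh p).comp (AddMonoidHom.fst (↥(A2G12 p)) (Kc p × Kc p))

variable (p) in
def ΦMc : Mc p →+ ZMod p := (ΦQ p).comp (AddMonoidHom.fst (Qc p) ↥(IG p))

variable (p) in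
def DE1I : ↥(IG p) →+ ZMod p :=
  (Dfun p (E1 p)).comp ((IG p).subtype.toAddMonoidHom)

lemma ΦQ_ωc [NeZero p] (g g' : Gp p) :
    ΦQ p (ωc p g g') = -(e2₂ p (π12 p g) * E1 p g') := by
  show πh p (c12coc p (π12 p g) (π12 p g')) = _
  rw [πh_c12]
  rfl

lemma ΦQ_θω [NeZero p] (g : Gp p) (y : RG p) :
    ΦQ p (θω p g y) = -(e2₂ p (π12 p g) * Dfun p (E1 p) y) := by
  have h2 : ∀ (g' : Gp p) (a : ℤ), ΦQ p (a • ωc p g g')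
      = ((a : ZMod p) * E1 p g') * (-(e2₂ p (π12 p g))) := by
    intro g' a
    rw [AddMonoidHom.map_zsmul, ΦQ_ωc, zsmul_eq_mul]
    ring
  calc ΦQ p (θω p g y) = Finsupp.sum y.coeff fun g' a => ΦQ p (a • ωc p g g') := by
        rw [θω]; exact map_finsuppSum _ y.coeff _
    _ = Finsupp.sum y.coeff fun g' a => ((a : ZMod p) * E1 p g') * (-(e2₂ p (π12 p g))) :=
        Finsupp.sum_congr fun g' _ => h2 g' _
    _ = (Finsupp.sum y.coeff fun g' a => (a : ZMod p) * E1 p g') * (-(e2₂ p (π12 p g))) :=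
        (Finsupp.sum_mul _ y.coeff).symm
    _ = -(e2₂ p (π12 p g) * Dfun p (E1 p) y) := by rw [← Dfun_apply]; ring

lemma ΦQ_actM_fH [NeZero p] (hp : p.Prime) (hodd : p ≠ 2)
    {H : Subgroup (Gp p)} (hH : H ∈ HH p) (z : ↥H → Kc p × Kc p) (u : Gp p) (h : ↥H) :
    ΦMc p (actM p u (fHof p H z h)) = 0 := by
  show ΦQ p (actQ p u (fHof p H z h).1 + θω p u ((fHof p H z h).2 : RG p)) = 0
  rw [map_add, ΦQ_θω]
  have h1 : ΦQ p (actQ p u (fHof p H z h).1) = 0 := by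
    show πh p (of ℤ (G12t p) (π12 p u) • (fHof p H z h).1.1) = 0
    rw [πh_of_smul]
    show πh p (-(vH p H (π12 p (h : Gp p)))) = 0
    rw [map_neg, πh_vH hp hodd, neg_zero]
  have h2 : Dfun p (E1 p) ((fHof p H z h).2 : RG p) = 0 := by
    show DE1I p (nOrd p H • dH p H h) = 0
    rw [AddMonoidHom.map_nsmul, nsmul_eq_mul,
      show ((nOrd p H : ℕ) : ZMod p) = 0 from
        (ZMod.natCast_eq_zero_iff _ _).mpr (p_dvd_nOrd hp hH), zero_mul]
  rw [h1, h2, mul_zero, neg_zero, add_zero]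

lemma HH_finite [NeZero p] : (HH p).Finite := by
  have h1 : {H : Subgroup (Gp p) | ∃ τ ∈ G12sub p, H = Subgroup.closure {τ, s3 p, s4 p}}
      = (fun τ => Subgroup.closure {τ, s3 p, s4 p}) '' ((G12sub p : Set (Gp p))) := by
    ext H
    constructor
    · rintro ⟨τ, hτ, rfl⟩; exact ⟨τ, hτ, rfl⟩
    · rintro ⟨τ, hτ, rfl⟩; exact ⟨τ, hτ, rfl⟩
  rw [HH, h1]
  exact ((Set.toFinite _).image _).insert _

variable (p) in
def bigSum (F : ∀ H : ↥(HH p), (↥(H.val) → Mc p)) (g : Gp p) (m : MC p) : Mc p :=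
  ∑ᶠ H : ↥(HH p), Finsupp.sum (m.2 H) fun c a =>
    a • actM p (Quotient.out (g • c))
      (F H ⟨(Quotient.out (g • c))⁻¹ * (g * Quotient.out c), by
        rw [← QuotientGroup.eq, QuotientGroup.out_eq', ← smul_eq_mul,
          MulAction.Quotient.mk_smul_out]⟩)

lemma actMFull_fst (F : ∀ H : ↥(HH p), (↥(H.val) → Mc p)) (g : Gp p) (m : MC p) :
    (actMFull p F g m).1 = actM p g m.1 + bigSum p F g m := rfl

lemma ΦMc_bigSum [NeZero p] (hp : p.Prime) (hodd : p ≠ 2)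
    (z : ∀ H : ↥(HH p), (↥(H.val) → Kc p × Kc p)) (g : Gp p) (m : MC p) :
    ΦMc p (bigSum p (fun H => fHof p H.val (z H)) g m) = 0 := by
  haveI : Finite ↥(HH p) := (HH_finite (p := p)).to_subtype
  rw [bigSum, (ΦMc p).map_finsum (Set.toFinite _)]
  rw [finsum_congr (fun H => ?_), finsum_zero]
  rw [map_finsuppSum]
  rw [Finsupp.sum]
  refine Finset.sum_eq_zero fun c _ => ?_
  rw [AddMonoidHom.map_zsmul, ΦQ_actM_fH hp hodd H.2 (z H), smul_zero]

lemma ΦMc_actMFull [NeZero p] (hp : p.Prime) (hodd : p ≠ 2)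
    (z : ∀ H : ↥(HH p), (↥(H.val) → Kc p × Kc p)) (g : Gp p) (m : MC p) :
    ΦMc p ((actMFull p (fun H => fHof p H.val (z H)) g m).1)
      = ΦMc p m.1 - e2₂ p (π12 p g) * DE1I p m.1.2 := by
  rw [actMFull_fst, map_add, ΦMc_bigSum hp hodd, add_zero]
  show ΦQ p (actQ p g m.1.1 + θω p g ((m.1.2 : ↥(IG p)) : RG p)) = _
  rw [map_add, ΦQ_θω]
  have h1 : ΦQ p (actQ p g m.1.1) = ΦMc p m.1 := by
    show πh p (of ℤ (G12t p) (π12 p g) • m.1.1.1) = _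
    rw [πh_of_smul]
    rfl
  rw [h1,
    show Dfun p (E1 p) ((m.1.2 : ↥(IG p)) : RG p) = DE1I p m.1.2 from rfl]
  ring

variable (p) in
def wE13 : Gp p → ZMod p := fun g => E1 p g * (Multiplicative.toAdd g).2.2.1

variable (p) in
def ΨMc : Mc p →+ ZMod p :=
  (Dfun p (wE13 p)).comp
    (((IG p).subtype.toAddMonoidHom).comp (AddMonoidHom.snd (Qc p) ↥(IG p)))

lemma Dfun_wE13_s3_mul (y : RG p) :
    Dfun p (wE13 p) (MonoidAlgebra.single (s3 p) 1 * y)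
      = Dfun p (wE13 p) y + Dfun p (E1 p) y := by
  rw [Dfun_single_mul, Dfun_apply, Dfun_apply, ← Finsupp.sum_add]
  refine Finsupp.sum_congr fun h _ => ?_
  have hE1 : E1 p (s3 p * h) = (0 : ZMod p) + E1 p h := rfl
  have hE3 : (Multiplicative.toAdd (s3 p * h)).2.2.1
      = (1 : ZMod p) + (Multiplicative.toAdd h).2.2.1 := rfl
  have hw : wE13 p (s3 p * h) = wE13 p h + E1 p h := by
    show E1 p (s3 p * h) * (Multiplicative.toAdd (s3 p * h)).2.2.1 = _
    rw [hE1, hE3, zero_add, wE13]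
    ring
  rw [hw]
  ring

lemma ΨMc_actM_s3 (m : Mc p) :
    ΨMc p (actM p (s3 p) m) = ΨMc p m + Dfun p (E1 p) ((m.2 : ↥(IG p)) : RG p) := by
  show Dfun p (wE13 p) ((actIG p (s3 p) m.2 : ↥(IG p)) : RG p) = _
  show Dfun p (wE13 p) (of ℤ (Gp p) (s3 p) * ((m.2 : ↥(IG p)) : RG p)) = _
  rw [MonoidAlgebra.of_apply, Dfun_wE13_s3_mul]
  rfl

lemma ΨMc_bigSum [NeZero p] (hp : p.Prime)
    (z : ∀ H : ↥(HH p), (↥(H.val) → Kc p × Kc p)) (g : Gp p) (m : MC p) :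
    ΨMc p (bigSum p (fun H => fHof p H.val (z H)) g m) = 0 := by
  haveI : Finite ↥(HH p) := (HH_finite (p := p)).to_subtype
  rw [bigSum, (ΨMc p).map_finsum (Set.toFinite _)]
  rw [finsum_congr (fun H => ?_), finsum_zero]
  rw [map_finsuppSum]
  rw [Finsupp.sum]
  refine Finset.sum_eq_zero fun c _ => ?_
  rw [AddMonoidHom.map_zsmul]
  have hz : ∀ (u : Gp p) (h : ↥(H.val)),
      ΨMc p (actM p u (fHof p H.val (z H) h)) = 0 := by
    intro u h
    show Dfun p (wE13 p) ((actIG p u (nOrd p H.val • dH p H.val h) : ↥(IG p)) : RG p) = 0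
    show Dfun p (wE13 p)
      (of ℤ (Gp p) u * ((nOrd p H.val • dH p H.val h : ↥(IG p)) : RG p)) = 0
    have hco : ((nOrd p H.val • dH p H.val h : ↥(IG p)) : RG p)
        = nOrd p H.val • ((dH p H.val h : ↥(IG p)) : RG p) := rfl
    rw [hco, mul_smul_comm, AddMonoidHom.map_nsmul, nsmul_eq_mul,
      show ((nOrd p H.val : ℕ) : ZMod p) = 0 from
        (ZMod.natCast_eq_zero_iff _ _).mpr (p_dvd_nOrd hp H.2), zero_mul]
  rw [hz, smul_zero]

end Aux16


theorem statement16 (p : ℕ) [NeZero p] (hp : p.Prime) (hodd : p ≠ 2)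
    (zH : ∀ H : ↥(HH p), (↥(H.val) → Kc p × Kc p))
    (hz : ∀ H : ↥(HH p), IsOneCocycle (resAct H.val (actM p)) (fHof p H.val (zH H))) :
    ¬ ∃ a b : MC p,
      (∀ g ∈ G34sub p, actMFull p (fun H => fHof p H.val (zH H)) g a = a) ∧
      (∀ g ∈ G34sub p, actMFull p (fun H => fHof p H.val (zH H)) g b = b) ∧
      ((((u12e p, 0, 0), 0), 0) : MC p) =
        (actMFull p (fun H => fHof p H.val (zH H)) (s1 p) a - a) +
        (actMFull p (fun H => fHof p H.val (zH H)) (s2 p) b - b) := by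
  haveI := Fact.mk hp.one_lt
  rintro ⟨a, b, ha, hb, heq⟩
  -- Step 1: the `E1`-weighted sum of the `I[G]`-component of `b` vanishes,
  -- by applying the invariance of `b` under `σ₃`.
  have hs3G34 : s3 p ∈ G34sub p := Subgroup.subset_closure (by simp)
  have hb3 : actMFull p (fun H => fHof p H.val (zH H)) (s3 p) b = b := hb (s3 p) hs3G34
  have hΨ : Aux16.ΨMc p ((actMFull p (fun H => fHof p H.val (zH H)) (s3 p) b).1)
      = Aux16.ΨMc p b.1 := congrArg (fun m : MC p => Aux16.ΨMc p m.1) hb3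
  rw [Aux16.actMFull_fst, map_add, Aux16.ΨMc_bigSum hp, add_zero,
    Aux16.ΨMc_actM_s3] at hΨ
  have hD1b : Aux16.Dfun p (Aux16.E1 p) ((b.1.2 : ↥(IG p)) : RG p) = 0 :=
    add_eq_left.mp hΨ
  -- Step 2: apply the invariant functional `ΦMc` to the main equation.
  have hΦ := congrArg (fun m : MC p => Aux16.ΦMc p m.1) heq
  simp only [Prod.fst_add, Prod.fst_sub, map_add, map_sub] at hΦ
  rw [Aux16.ΦMc_actMFull hp hodd zH (s1 p) a,
    Aux16.ΦMc_actMFull hp hodd zH (s2 p) b] at hΦ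
  have hL : Aux16.ΦMc p (((u12e p, 0, 0), 0) : Mc p) = 1 := by
    show Aux16.πh p (u12e p) = 1
    rw [Aux16.πh_apply]
    show Aux16.Dfun p (Aux16.e2₂ p) (of ℤ (G12t p) (t2 p) - 1) = 1
    rw [map_sub, MonoidAlgebra.of_apply, Aux16.Dfun_single, MonoidAlgebra.one_def,
      Aux16.Dfun_single,
      show Aux16.e2₂ p (t2 p) = 1 from rfl,
      show Aux16.e2₂ p (1 : G12t p) = 0 from rfl]
    norm_num
  rw [hL, show Aux16.e2₂ p (π12 p (s1 p)) = 0 from rfl,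
    show Aux16.e2₂ p (π12 p (s2 p)) = 1 from rfl,
    show Aux16.DE1I p b.1.2 = 0 from hD1b] at hΦ
  simp only [zero_mul, one_mul, mul_zero, sub_zero, sub_self, add_zero, zero_add] at hΦ
  exact one_ne_zero hΦ

end
end

section
/- Assume p ≠ 2. There do not exist elements a, b ∈ M_ω fixed by every element of G34 such that u12 = (σ1 − 1)·a + (σ2 − 1)·b in M_ω, where u12 is viewed in M_ω via the inclusions A_2(G12) ⊆ Q ⊆ M_ω. -/
open MonoidAlgebra

set_option maxHeartbeats 1000000
set_option synthInstance.maxHeartbeats 400000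
set_option linter.unusedSectionVars false

noncomputable section

namespace Aux17


open TrivSqZeroExt

abbrev DN (p : ℕ) := TrivSqZeroExt (ZMod p) (ZMod p)

variable {p : ℕ}

/-- monoid hom `g ↦ 1 + ε·e(g)` into dual numbers. -/
def dnMH {G : Type*} [CommGroup G] (e : G →* Multiplicative (ZMod p)) : G →* DN p where
  toFun g := 1 + TrivSqZeroExt.inr (Multiplicative.toAdd (e g))
  map_one' := by simp
  map_mul' g h := by
    simp only [map_mul, toAdd_mul]
    rw [mul_add, mul_one, add_mul, one_mul, inr_mul_inr]
    rw [TrivSqZeroExt.inr_add]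
    abel

def Phi {G : Type*} [CommGroup G] (e : G →* Multiplicative (ZMod p)) :
    MonoidAlgebra ℤ G →ₐ[ℤ] DN p :=
  MonoidAlgebra.lift ℤ (DN p) G (dnMH e)

def epsh (p : ℕ) (G : Type*) [CommGroup G] : MonoidAlgebra ℤ G →ₐ[ℤ] ZMod p :=
  MonoidAlgebra.lift ℤ (ZMod p) G 1

variable {G : Type*} [CommGroup G]

lemma Phi_of (e : G →* Multiplicative (ZMod p)) (g : G) :
    Phi e (of ℤ G g) = 1 + TrivSqZeroExt.inr (Multiplicative.toAdd (e g)) :=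
  MonoidAlgebra.lift_of _ _

lemma epsh_of (g : G) : epsh p G (of ℤ G g) = 1 :=
  MonoidAlgebra.lift_of _ _

lemma fst_Phi (e : G →* Multiplicative (ZMod p)) (x : MonoidAlgebra ℤ G) :
    (Phi e x).fst = epsh p G x := by
  have h : (TrivSqZeroExt.fstHom ℤ (ZMod p) (ZMod p)).comp (Phi e) = epsh p G := by
    apply MonoidAlgebra.algHom_ext
    intro g
    show (TrivSqZeroExt.fstHom ℤ (ZMod p) (ZMod p)) (Phi e (of ℤ G g)) = epsh p G (of ℤ G g)
    rw [Phi_of, epsh_of]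
    simp
    exact Subsingleton.elim _ _
  exact (congrFun (congrArg DFunLike.coe h) x)

lemma snd_Phi (e : G →* Multiplicative (ZMod p)) (x : MonoidAlgebra ℤ G) :
    (Phi e x).snd = Finsupp.sum x.coeff fun g a => (a : ZMod p) * Multiplicative.toAdd (e g) := by
  induction x using MonoidAlgebra.induction with
  | zero => simp
  | single_add g a f hg ha ih =>
    rw [map_add, TrivSqZeroExt.snd_add, ih, MonoidAlgebra.coeff_add,
      Finsupp.sum_add_index' (by intro _; simp) (by intro _ _ _; push_cast; ring)]
    congr 1
    have hs : (MonoidAlgebra.single g a : MonoidAlgebra ℤ G) = a • of ℤ G g := by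
      rw [MonoidAlgebra.of_apply, MonoidAlgebra.smul_single, smul_eq_mul, mul_one]
    rw [MonoidAlgebra.coeff_single, Finsupp.sum_single_index (by simp), hs, map_zsmul, TrivSqZeroExt.snd_smul, Phi_of]
    simp [zsmul_eq_mul]

lemma snd_Phi_mul (e : G →* Multiplicative (ZMod p)) (x y : MonoidAlgebra ℤ G) :
    (Phi e (x * y)).snd = epsh p G x * (Phi e y).snd + epsh p G y * (Phi e x).snd := by
  rw [map_mul, TrivSqZeroExt.snd_mul, fst_Phi, fst_Phi]
  simp [smul_eq_mul, mul_comm]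


end Aux17

namespace Aux17

variable (p : ℕ) [NeZero p]

/-- second-coordinate character of `G12t`. -/
def e2m : G12t p →* Multiplicative (ZMod p) :=
  AddMonoidHom.toMultiplicative (AddMonoidHom.snd (ZMod p) (ZMod p))

/-- first-coordinate character of `G12t`. -/
def e1m : G12t p →* Multiplicative (ZMod p) :=
  AddMonoidHom.toMultiplicative (AddMonoidHom.fst (ZMod p) (ZMod p))

/-- the homomorphism `π : A₂(G₁₂) → Z/p` of the paper, as an `AddMonoidHom`. -/
def piA : ↥(A2G12 p) →+ ZMod p :=
  AddMonoidHom.mk' (fun v => (Phi (e2m p) ((v : R12 p × R12 p)).1).snd)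
    (by intro u v
        show (Phi (e2m p) (((u : R12 p × R12 p) + (v : R12 p × R12 p)).1)).snd = _
        rw [Prod.fst_add, map_add, TrivSqZeroExt.snd_add])

lemma snd_Phi_of_sub_one {G : Type*} [CommGroup G] (e : G →* Multiplicative (ZMod p)) (g : G) :
    (Phi e (of ℤ G g - 1)).snd = Multiplicative.toAdd (e g) := by
  rw [map_sub, map_one, Phi_of]
  simp

lemma epsh_of_sub_one {G : Type*} [CommGroup G] (g : G) :
    epsh p G (of ℤ G g - 1) = 0 := by
  rw [map_sub, map_one, epsh_of, sub_self]

lemma eps_A2 (v : ↥(A2G12 p)) : epsh p (G12t p) ((v : R12 p × R12 p).1) = 0 := by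
  have hv : d12map p (v : R12 p × R12 p) = 0 := v.2
  have hv' : (v : R12 p × R12 p).1 • (of ℤ (G12t p) (t1 p) - 1)
      + (v : R12 p × R12 p).2 • (of ℤ (G12t p) (t2 p) - 1) = 0 := hv
  rw [smul_eq_mul, smul_eq_mul] at hv'
  have h := congrArg (fun z => (Phi (e1m p) z).snd) hv'
  simp only [map_add, TrivSqZeroExt.snd_add, snd_Phi_mul, map_zero,
    TrivSqZeroExt.snd_zero, snd_Phi_of_sub_one, epsh_of_sub_one] at h
  rw [show Multiplicative.toAdd (e1m p (t1 p)) = (1 : ZMod p) from rfl,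
      show Multiplicative.toAdd (e1m p (t2 p)) = (0 : ZMod p) from rfl] at h
  simpa using h

lemma piA_smul_u12 (x : R12 p) : piA p (x • u12e p) = epsh p (G12t p) x := by
  show (Phi (e2m p) (((x • u12e p : ↥(A2G12 p)) : R12 p × R12 p)).1).snd = _
  rw [SetLike.val_smul, Prod.smul_fst, smul_eq_mul,
    show (u12e p : R12 p × R12 p).1 = of ℤ (G12t p) (t2 p) - 1 from rfl,
    snd_Phi_mul, snd_Phi_of_sub_one, epsh_of_sub_one,
    show Multiplicative.toAdd (e2m p (t2 p)) = (1 : ZMod p) from rfl]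
  ring

lemma piA_u12 : piA p (u12e p) = 1 := by
  have h := piA_smul_u12 p 1
  rw [one_smul, map_one] at h
  exact h

lemma piA_smul_mem (g : G12t p) (v : ↥(A2G12 p)) :
    piA p (of ℤ (G12t p) g • v) = piA p v := by
  show (Phi (e2m p) (((of ℤ (G12t p) g • v : ↥(A2G12 p)) : R12 p × R12 p)).1).snd = _
  rw [SetLike.val_smul, Prod.smul_fst, smul_eq_mul, snd_Phi_mul, epsh_of, eps_A2]
  simp only [one_mul, zero_mul, add_zero]
  rfl

lemma piA_b1 : piA p (b1e p) = 0 := by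
  show (Phi (e2m p) ((b1e p : R12 p × R12 p)).1).snd = 0
  rw [show (b1e p : R12 p × R12 p).1 = NN p (t1 p) from rfl, NN, map_sum,
    TrivSqZeroExt.snd_sum]
  refine Finset.sum_eq_zero fun k _ => ?_
  rw [map_pow, Phi_of, show Multiplicative.toAdd (e2m p (t1 p)) = (0 : ZMod p) from rfl]
  simp

lemma piA_b2smul (x : R12 p) : piA p (x • b2e p) = 0 := by
  show (Phi (e2m p) (((x • b2e p : ↥(A2G12 p)) : R12 p × R12 p)).1).snd = 0
  rw [SetLike.val_smul, Prod.smul_fst,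
    show (b2e p : R12 p × R12 p).1 = (0 : R12 p) from rfl, smul_zero, map_zero]
  simp

lemma piA_c12 (x y : G12t p) :
    piA p (c12coc p x y) =
      -(((Multiplicative.toAdd y).1.val : ZMod p)
        * ((Multiplicative.toAdd x).2.val : ZMod p)) := by
  rw [c12coc]
  rw [map_add, map_add, map_nsmul, map_nsmul, piA_b1, piA_b2smul, smul_zero, smul_zero,
    add_zero, add_zero]
  rw [umn, smul_add, smul_smul, smul_smul, map_add, piA_smul_u12, piA_smul_u12]
  rw [map_mul, map_mul, epsh_of, one_mul, one_mul]
  rw [show (Finset.range 0) = ∅ from rfl, Finset.sum_empty, mul_zero, map_zero, add_zero]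
  rw [map_neg, map_mul, epsh_of, one_mul, map_sum]
  have : ∀ j ∈ Finset.range (Multiplicative.toAdd y).1.val,
      (epsh p (G12t p)) (∑ i ∈ Finset.range (Multiplicative.toAdd x).2.val,
        (of ℤ (G12t p)) (t1 p ^ i * t2 p ^ j)) = ((Multiplicative.toAdd x).2.val : ZMod p) := by
    intro j _
    rw [map_sum]
    rw [Finset.sum_congr rfl (fun i _ => epsh_of (p := p) _)]
    simp
  rw [Finset.sum_congr rfl this]
  simp [mul_comm]

/-- `πA` composed with the first projection of `Q`. -/
def FQ : Qc p →+ ZMod p :=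
  (piA p).comp (AddMonoidHom.fst (↥(A2G12 p)) (Kc p × Kc p))

lemma piA_theta (g : Gp p) (y : RG p) :
    piA p ((θω p g y).1) =
      Finsupp.sum y.coeff fun g' c =>
        (c : ZMod p) * -(((Multiplicative.toAdd (π12 p g')).1.val : ZMod p)
            * ((Multiplicative.toAdd (π12 p g)).2.val : ZMod p)) := by
  rw [show piA p ((θω p g y).1) = FQ p (θω p g y) from rfl, θω, map_finsuppSum]
  refine Finsupp.sum_congr fun g' _ => ?_
  rw [show FQ p ((y.coeff g') • ωc p g g') = piA p ((y.coeff g') • (ωc p g g').1) from rfl,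
    map_zsmul, show (ωc p g g').1 = c12coc p (π12 p g) (π12 p g') from rfl, piA_c12,
    zsmul_eq_mul]

end Aux17

theorem statement17 (p : ℕ) [NeZero p] (hp : p.Prime) (hodd : p ≠ 2) :
    ¬ ∃ a b : Mc p,
      (∀ g ∈ G34sub p, actM p g a = a) ∧
      (∀ g ∈ G34sub p, actM p g b = b) ∧
      (((u12e p, 0, 0), 0) : Mc p) =
        (actM p (s1 p) a - a) + (actM p (s2 p) b - b) := by
  haveI : Fact (1 < p) := ⟨hp.one_lt⟩
  rintro ⟨a, b, ha, hb, heq⟩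
  set yb : RG p := (b.2 : RG p) with hybdef
  -- σ₃-invariance of the `I[G]`-component of `b`
  have hs3mem : s3 p ∈ G34sub p := Subgroup.subset_closure (Set.mem_insert _ _)
  have hfix : of ℤ (Gp p) (s3 p) * yb = yb :=
    congrArg Subtype.val (congrArg Prod.snd (hb (s3 p) hs3mem))
  have hshift : ∀ g : Gp p, yb.coeff (s3 p * g) = yb.coeff g := by
    intro g
    have h2 := congrArg (fun z : RG p => z.coeff (s3 p * g)) hfix
    simp only [MonoidAlgebra.of_apply, MonoidAlgebra.coeff_single_mul_apply, one_mul,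
      inv_mul_cancel_left] at h2
    exact h2.symm
  have hpow : ∀ (k : ℕ) (g : Gp p), yb.coeff (s3 p ^ k * g) = yb.coeff g := by
    intro k
    induction k with
    | zero => intro g; simp
    | succ n ih => intro g; rw [pow_succ, mul_assoc, ih, hshift]
  -- the weighted sum of the coefficients of `yb` vanishes
  have hS : (Finsupp.sum yb.coeff fun g' c =>
      (c : ZMod p) * ((Multiplicative.toAdd g').1 : ZMod p)) = 0 := by
    rw [Finsupp.sum_fintype _ _ (fun _ => by simp)]
    have hre : (∑ g : Gp p, ((yb.coeff g : ZMod p) * ((Multiplicative.toAdd g).1 : ZMod p))) =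
        ∑ v : ZMod p × ZMod p × ZMod p × ZMod p,
          ((yb.coeff (Multiplicative.ofAdd v) : ZMod p) * v.1) :=
      (Fintype.sum_equiv Multiplicative.ofAdd _ _ (fun v => rfl)).symm
    rw [hre, Fintype.sum_prod_type]
    refine Finset.sum_eq_zero fun x _ => ?_
    rw [Fintype.sum_prod_type]
    refine Finset.sum_eq_zero fun y2 _ => ?_
    rw [Fintype.sum_prod_type, Finset.sum_comm]
    refine Finset.sum_eq_zero fun y4 _ => ?_
    have hconst : ∀ y3 : ZMod p, yb.coeff (Multiplicative.ofAdd (x, y2, y3, y4)) =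
        yb.coeff (Multiplicative.ofAdd (x, y2, 0, y4)) := by
      intro y3
      have hsp : s3 p ^ y3.val =
          Multiplicative.ofAdd ((0, 0, (y3.val : ZMod p), 0) :
            ZMod p × ZMod p × ZMod p × ZMod p) := by
        rw [show s3 p = Multiplicative.ofAdd ((0, 0, 1, 0) :
            ZMod p × ZMod p × ZMod p × ZMod p) from rfl, ← ofAdd_nsmul]
        congr 1
        simp [Prod.ext_iff]
      have he : s3 p ^ y3.val * Multiplicative.ofAdd
          ((x, y2, 0, y4) : ZMod p × ZMod p × ZMod p × ZMod p) =
          Multiplicative.ofAdd ((x, y2, y3, y4) : ZMod p × ZMod p × ZMod p × ZMod p) := by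
        rw [hsp, ← ofAdd_add]
        congr 1
        simp [Prod.ext_iff, ZMod.natCast_val, ZMod.cast_id]
      have h3 := hpow y3.val (Multiplicative.ofAdd (x, y2, 0, y4))
      rw [he] at h3
      exact h3
    calc (∑ y3 : ZMod p, ((yb.coeff (Multiplicative.ofAdd (x, y2, y3, y4)) : ℤ) : ZMod p) * x)
        = ∑ _y3 : ZMod p, ((yb.coeff (Multiplicative.ofAdd (x, y2, 0, y4)) : ℤ) : ZMod p) * x :=
          Finset.sum_congr rfl (fun y3 _ => by rw [hconst y3])
      _ = 0 := by
          rw [Finset.sum_const, Finset.card_univ, ZMod.card, nsmul_eq_mul,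
            ZMod.natCast_self, zero_mul]
  -- apply `πA` to the first component of the main equation
  have h1 := congrArg (fun m : Mc p => Aux17.piA p m.1.1) heq
  have hRHS : ((actM p (s1 p) a - a) + (actM p (s2 p) b - b)).1.1
      = (of ℤ (G12t p) (π12 p (s1 p)) • a.1.1 + (θω p (s1 p) (a.2 : RG p)).1 - a.1.1)
        + (of ℤ (G12t p) (π12 p (s2 p)) • b.1.1 + (θω p (s2 p) yb).1 - b.1.1) := rfl
  simp only [hRHS] at h1
  rw [map_add, map_sub, map_sub, map_add, map_add, Aux17.piA_smul_mem,
    Aux17.piA_smul_mem, Aux17.piA_u12, Aux17.piA_theta, Aux17.piA_theta] at h1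
  have hθ1 : (Finsupp.sum (a.2 : RG p).coeff fun g' c =>
      (c : ZMod p) * -(((Multiplicative.toAdd (π12 p g')).1.val : ZMod p)
          * ((Multiplicative.toAdd (π12 p (s1 p))).2.val : ZMod p))) = 0 := by
    rw [Finsupp.sum_congr (g2 := fun _ _ => (0 : ZMod p)) (fun g' _ => by
      rw [show (Multiplicative.toAdd (π12 p (s1 p))).2 = (0 : ZMod p) from rfl,
        ZMod.val_zero, Nat.cast_zero, mul_zero, neg_zero, mul_zero])]
    exact Finset.sum_const_zero
  have hval1 : ((Multiplicative.toAdd (π12 p (s2 p))).2.val : ZMod p) = 1 := by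
    rw [show (Multiplicative.toAdd (π12 p (s2 p))).2 = (1 : ZMod p) from rfl,
      ZMod.val_one, Nat.cast_one]
  have hθ2 : (Finsupp.sum yb.coeff fun g' c =>
      (c : ZMod p) * -(((Multiplicative.toAdd (π12 p g')).1.val : ZMod p)
          * ((Multiplicative.toAdd (π12 p (s2 p))).2.val : ZMod p))) = 0 := by
    calc (Finsupp.sum yb.coeff fun g' c =>
          (c : ZMod p) * -(((Multiplicative.toAdd (π12 p g')).1.val : ZMod p)
            * ((Multiplicative.toAdd (π12 p (s2 p))).2.val : ZMod p)))
        = Finsupp.sum yb.coeff (fun g' c =>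
            -((c : ZMod p) * ((Multiplicative.toAdd g').1 : ZMod p))) := by
          refine Finsupp.sum_congr fun g' _ => ?_
          rw [hval1, mul_one,
            show (Multiplicative.toAdd (π12 p g')).1 = (Multiplicative.toAdd g').1 from rfl,
            ZMod.natCast_val, ZMod.cast_id, mul_neg]
      _ = -(Finsupp.sum yb.coeff fun g' c =>
            ((c : ZMod p) * ((Multiplicative.toAdd g').1 : ZMod p))) := by
          rw [Finsupp.sum, Finsupp.sum, ← Finset.sum_neg_distrib]
      _ = 0 := by rw [hS, neg_zero]
  rw [hθ1, hθ2] at h1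
  have hfin : (1 : ZMod p) = 0 := by simpa using h1
  exact one_ne_zero hfin

end
end
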